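/- Let T' be a rooted tree with leaf set Lv(T'), let ℓ be a non-root leaf of T', and let m ≥ 2. Let T be the rooted tree obtained from T' by attaching m new leaves l_1,…,l_m as children of ℓ, so that ℓ becomes an internal vertex of T of out-degree m and Lv(T) = (Lv(T') ∖ {ℓ}) ∪ {l_1,…,l_m}. Let ψ be the ℂ-algebra homomorphism from ℂ[p_ij : {i,j} a 2-element subset of Lv(T)] to the polynomial ring ℂ[s_⋆, s_e (e ∈ E(T')), u_⋆, u_0, u_1, …, u_m] defined by: ψ(p_ij) = s_⋆·u_⋆·∏_{e ∈ P_{T'}(i,j)} s_e for i,j ∈ Lv(T') ∖ {ℓ}; ψ(p_{l_α l_β}) = s_⋆·u_⋆·u_α·u_β for 1 ≤ α < β ≤ m; and ψ(p_{i,l_α}) = s_⋆·u_⋆·u_0·u_α·∏_{e ∈ P_{T'}(i,ℓ)} s_e for i ∈ Lv(T') ∖ {ℓ} and 1 ≤ α ≤ m. Then ker ψ = ker φ_{B_T}. (This expresses the toric ideal I(B_T) as the toric fiber product of the toric ideals I(B*_{T'}) and I(B*_{S_m}), where S_m is the star tree on m+1 leaves glued to T' along the edge into ℓ.) -/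

import Mathlib

attribute [local instance] Classical.propDecidable

/-- A rooted tree whose leaves are labeled by a set `L` containing a distinguished
root leaf, with all edges directed away from the root and no vertices of degree two.
The parent map `par` sends every non-root vertex to the vertex its unique incoming edge
comes from, and fixes the root.  A vertex `u` is a descendant of a vertex `v` iff some
iterate of `par` sends `u` to `v`. -/
structure RTree (L : Type) where
  V : Type
  fintypeV : Fintype V
  leaf : L ↪ V
  root : L
  par : V → V
  par_root : par (leaf root) = leaf root
  par_ne : ∀ v : V, v ≠ leaf root → par v ≠ v
  reaches_root : ∀ v : V, ∃ k : ℕ, par^[k] v = leaf root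
  leaf_iff : ∀ v : V, v ≠ leaf root → (v ∈ Set.range leaf ↔ ∀ u, par u ≠ v)
  root_unique_child : ∃! u : V, u ≠ leaf root ∧ par u = leaf root
  no_degree_two : ∀ v : V, v ∉ Set.range leaf → ∃ u w : V, u ≠ w ∧ par u = v ∧ par w = v

instance {L : Type} (T : RTree L) : Fintype T.V := T.fintypeV

/-- `T.isAnc v u` : `v` is an ancestor of `u`, i.e. `u` is a descendant of `v`. -/
def RTree.isAnc {L : Type} (T : RTree L) (v u : T.V) : Prop := ∃ k : ℕ, T.par^[k] u = v

/-- The non-root vertices of `T`; these are in bijection `v ↦ e(v)` with the edges of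
`T` via the unique incoming edge, and index the rows of `B_T`. -/
abbrev RTree.NR {L : Type} (T : RTree L) := {v : T.V // v ≠ T.leaf T.root}

/-- `T.onPath v i j` : the edge `e(v)` lies on the unique path `P(i,j)` between the
distinct leaves `i` and `j`, i.e. exactly one of `i`, `j` is a descendant of `v`. -/
def RTree.onPath {L : Type} (T : RTree L) (v : T.V) (i j : L) : Prop :=
  Xor' (T.isAnc v (T.leaf i)) (T.isAnc v (T.leaf j))

/-- The 2-element subsets of `L`, i.e. the non-diagonal unordered pairs. -/
abbrev Pairs (L : Type) := {s : Sym2 L // ¬ s.IsDiag}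

/-- The matrix `B_T`, with rows indexed by the edges `e(v)` of `T` (equivalently, by the
non-root vertices `v`) and columns indexed by 2-element subsets `{i,j}` of the leaf set:
the entry is `1` if `e(v) ∈ P(i,j)` and `0` otherwise. -/
noncomputable def BmatS {L : Type} (T : RTree L) : Matrix T.NR (Pairs L) ℕ :=
  Matrix.of fun v s => if ∃ i j : L, s.1 = s(i, j) ∧ T.onPath v.1 i j then 1 else 0

/-- The monomial map `φ_M` associated to a nonnegative-integer matrix `M`, sending
`p_c` to `∏_r t_r ^ M(r,c)`. -/
noncomputable def toricMap {R C : Type*} [Fintype R] (M : Matrix R C ℕ) :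
    MvPolynomial C ℂ →ₐ[ℂ] MvPolynomial R ℂ :=
  MvPolynomial.aeval fun c => ∏ r : R, MvPolynomial.X r ^ M r c

/-- The leaf label set `Lv(T) = (Lv(T') ∖ {ℓ}) ∪ {l_1, …, l_m}` of the tree obtained
from a tree with leaf label set `L'` by attaching `m` new leaves `l_1, …, l_m` (the
elements of `Fin m`) below the leaf `ℓ`. -/
abbrev NewLabels (L' : Type) (ℓ : L') (m : ℕ) := {x : L' // x ≠ ℓ} ⊕ Fin m

namespace AttachAux

variable {L' : Type} (T' : RTree L') (ℓ : L') (m : ℕ)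

/-- The parent map of the enlarged tree: old vertices keep their parent, and each new
leaf `l_α` has the old vertex of `ℓ` as its parent. -/
def newPar : T'.V ⊕ Fin m → T'.V ⊕ Fin m :=
  Sum.elim (fun w => Sum.inl (T'.par w)) (fun _ => Sum.inl (T'.leaf ℓ))

/-- The leaf labeling of the enlarged tree. -/
def newLeaf : NewLabels L' ℓ m → T'.V ⊕ Fin m :=
  Sum.elim (fun y => Sum.inl (T'.leaf y.1)) (fun α => Sum.inr α)

lemma newLeaf_inj : Function.Injective (newLeaf T' ℓ m) := by
  rintro (x | α) (y | β) h
  · simp only [newLeaf, Sum.elim_inl, Sum.inl.injEq] at h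
    exact congrArg Sum.inl (Subtype.ext (T'.leaf.injective h))
  · exact absurd h (by simp [newLeaf])
  · exact absurd h (by simp [newLeaf])
  · simp only [newLeaf, Sum.elim_inr, Sum.inr.injEq] at h
    exact congrArg Sum.inr h

lemma newPar_iter (k : ℕ) (w : T'.V) :
    (newPar T' ℓ m)^[k] (Sum.inl w) = Sum.inl (T'.par^[k] w) := by
  induction k with
  | zero => rfl
  | succ k ih =>
      rw [Function.iterate_succ_apply', ih, Function.iterate_succ_apply']
      rfl

end AttachAux

/-- The rooted tree `T` obtained from `T'` by attaching `m ≥ 2` new leaves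
`l_1, …, l_m` as children of the (non-root) leaf `ℓ` of `T'`, so that the vertex of `ℓ`
becomes an internal vertex of `T` of out-degree `m` and
`Lv(T) = (Lv(T') ∖ {ℓ}) ∪ {l_1, …, l_m}`. -/
noncomputable def attachStar {L' : Type} (T' : RTree L') (ℓ : L') (hℓ : ℓ ≠ T'.root)
    (m : ℕ) (hm : 2 ≤ m) : RTree (NewLabels L' ℓ m) where
  V := T'.V ⊕ Fin m
  fintypeV := inferInstance
  leaf := ⟨AttachAux.newLeaf T' ℓ m, AttachAux.newLeaf_inj T' ℓ m⟩
  root := Sum.inl ⟨T'.root, Ne.symm hℓ⟩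
  par := AttachAux.newPar T' ℓ m
  par_root := by
    show AttachAux.newPar T' ℓ m (Sum.inl (T'.leaf T'.root)) = Sum.inl (T'.leaf T'.root)
    simp [AttachAux.newPar, T'.par_root]
  par_ne := by
    rintro (w | α) hv
    · have hw : w ≠ T'.leaf T'.root := fun h => hv (by simp [AttachAux.newLeaf, h])
      simpa [AttachAux.newPar] using T'.par_ne w hw
    · simp [AttachAux.newPar]
  reaches_root := by
    rintro (w | α)
    · obtain ⟨k, hk⟩ := T'.reaches_root w
      exact ⟨k, by rw [AttachAux.newPar_iter, hk]; rfl⟩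
    · obtain ⟨k, hk⟩ := T'.reaches_root (T'.leaf ℓ)
      refine ⟨k + 1, ?_⟩
      rw [Function.iterate_succ_apply]
      show (AttachAux.newPar T' ℓ m)^[k] (Sum.inl (T'.leaf ℓ)) = _
      rw [AttachAux.newPar_iter, hk]; rfl
  leaf_iff := by
    rintro (w | α) hv
    · have hw : w ≠ T'.leaf T'.root := fun h => hv (by simp [AttachAux.newLeaf, h])
      constructor
      · rintro ⟨lab, hlab⟩
        rcases lab with y | α
        · simp only [Function.Embedding.coeFn_mk, AttachAux.newLeaf, Sum.elim_inl,
            Sum.inl.injEq] at hlab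
          rintro (u | β)
          · have := (T'.leaf_iff w hw).mp ⟨y.1, hlab⟩ u
            simpa [AttachAux.newPar] using this
          · have : T'.leaf ℓ ≠ w :=
              fun h => y.2 (T'.leaf.injective (hlab.trans h.symm))
            simpa [AttachAux.newPar] using this
        · exact absurd hlab (by simp [AttachAux.newLeaf])
      · intro h
        have h1 : ∀ u, T'.par u ≠ w := fun u hu => h (Sum.inl u) (by simp [AttachAux.newPar, hu])
        obtain ⟨y, hy⟩ := (T'.leaf_iff w hw).mpr h1
        have hyl : y ≠ ℓ := by
          rintro rfl
          exact h (Sum.inr ⟨0, by omega⟩)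
            (by simp only [AttachAux.newPar, Sum.elim_inr, hy])
        exact ⟨Sum.inl ⟨y, hyl⟩, by simp [AttachAux.newLeaf, hy]⟩
    · refine iff_of_true ⟨Sum.inr α, rfl⟩ ?_
      rintro (u | β) <;> simp [AttachAux.newPar]
  root_unique_child := by
    obtain ⟨u', ⟨hu1, hu2⟩, huniq⟩ := T'.root_unique_child
    refine ⟨Sum.inl u', ⟨?_, ?_⟩, ?_⟩
    · exact fun h => hu1 (by simpa [AttachAux.newLeaf] using h)
    · show AttachAux.newPar T' ℓ m (Sum.inl u') = Sum.inl (T'.leaf T'.root)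
      simp [AttachAux.newPar, hu2]
    · rintro (w | α) ⟨h1, h2⟩
      · have hw1 : w ≠ T'.leaf T'.root := fun h => h1 (by simp [AttachAux.newLeaf, h])
        have hw2 : T'.par w = T'.leaf T'.root := by
          simpa [AttachAux.newPar, AttachAux.newLeaf] using h2
        exact congrArg Sum.inl (huniq w ⟨hw1, hw2⟩)
      · exfalso
        have : T'.leaf ℓ = T'.leaf T'.root := by
          simpa [AttachAux.newPar, AttachAux.newLeaf] using h2
        exact hℓ (T'.leaf.injective this)
  no_degree_two := by
    rintro (w | α) hv
    · by_cases hwl : w = T'.leaf ℓ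
      · refine ⟨Sum.inr ⟨0, by omega⟩, Sum.inr ⟨1, by omega⟩, by simp, ?_, ?_⟩
        · simp [AttachAux.newPar, hwl]
        · simp [AttachAux.newPar, hwl]
      · have hw : w ∉ Set.range T'.leaf := by
          rintro ⟨y, hy⟩
          have hyl : y ≠ ℓ := fun h => hwl (h ▸ hy).symm
          exact hv ⟨Sum.inl ⟨y, hyl⟩, by simp [AttachAux.newLeaf, hy]⟩
        obtain ⟨u, u', huu, hu, hu'⟩ := T'.no_degree_two w hw
        exact ⟨Sum.inl u, Sum.inl u', by simp [huu], by simp [AttachAux.newPar, hu],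
          by simp [AttachAux.newPar, hu']⟩
    · exact absurd ⟨Sum.inr α, rfl⟩ hv

/-- The variables `s_⋆, s_e (e ∈ E(T')), u_⋆, u_0, u_1, …, u_m` of the target ring of
`ψ` : `Sum.inl none = s_⋆`, `Sum.inl (some e) = s_e`, `Sum.inr none = u_⋆`,
`Sum.inr (some 0) = u_0` (the edge of the star below `ℓ`), and
`Sum.inr (some α.succ) = u_α` (the edge into the new leaf `l_α`, for `α ∈ Fin m`). -/
abbrev PsiVars {L' : Type} (T' : RTree L') (m : ℕ) := Option T'.NR ⊕ Option (Fin (m + 1))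

/-- The exponent matrix of the monomial map `ψ`: for a column `{i,j}` (a 2-element
subset of the leaves of `T`), the corresponding monomial is
`ψ(p_ij) = s_⋆ · u_⋆ · ∏_{e ∈ P_{T'}(i,j)} s_e` if `i, j ∈ Lv(T') ∖ {ℓ}`;
`ψ(p_{l_α l_β}) = s_⋆ · u_⋆ · u_α · u_β` for `1 ≤ α < β ≤ m`; and
`ψ(p_{i,l_α}) = s_⋆ · u_⋆ · u_0 · u_α · ∏_{e ∈ P_{T'}(i,ℓ)} s_e` for
`i ∈ Lv(T') ∖ {ℓ}` and `1 ≤ α ≤ m`. -/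
noncomputable def psiMat {L' : Type} (T' : RTree L') (ℓ : L') (m : ℕ) :
    Matrix (PsiVars T' m) (Pairs (NewLabels L' ℓ m)) ℕ :=
  Matrix.of fun r s =>
    match r with
    | Sum.inl none => 1
    | Sum.inl (some e) =>
        if (∃ x y : {x : L' // x ≠ ℓ}, s.1 = s(Sum.inl x, Sum.inl y) ∧ T'.onPath e.1 x.1 y.1)
            ∨ (∃ (x : {x : L' // x ≠ ℓ}) (α : Fin m),
                s.1 = s(Sum.inl x, Sum.inr α) ∧ T'.onPath e.1 x.1 ℓ)
          then 1 else 0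
    | Sum.inr none => 1
    | Sum.inr (some β) =>
        if β = 0 then
          (if (∃ x : {x : L' // x ≠ ℓ}, (Sum.inl x : NewLabels L' ℓ m) ∈ s.1)
              ∧ (∃ α : Fin m, (Sum.inr α : NewLabels L' ℓ m) ∈ s.1) then 1 else 0)
        else
          (if ∃ α : Fin m, β = α.succ ∧ (Sum.inr α : NewLabels L' ℓ m) ∈ s.1 then 1 else 0)


open MvPolynomial

noncomputable def colSum {R C : Type*} [Fintype R] (M : Matrix R C ℕ) (d : C →₀ ℕ) : R →₀ ℕ :=
  Finsupp.equivFunOnFinite.symm fun r => d.sum fun c n => n * M r c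

lemma colSum_apply {R C : Type*} [Fintype R] (M : Matrix R C ℕ) (d : C →₀ ℕ) (r : R) :
    colSum M d r = d.sum fun c n => n * M r c := rfl

lemma toricMap_monomial {R C : Type*} [Fintype R] (M : Matrix R C ℕ) (d : C →₀ ℕ) (a : ℂ) :
    toricMap M (monomial d a) = monomial (colSum M d) a := by
  rw [toricMap, aeval_monomial, monomial_eq]
  congr 1
  conv_rhs => rw [Finsupp.prod_fintype _ _ (fun r => pow_zero _)]
  rw [Finsupp.prod]
  calc ∏ c ∈ d.support, (∏ r, X r ^ M r c) ^ d c
      = ∏ c ∈ d.support, ∏ r : R, X r ^ (M r c * d c) := by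
        refine Finset.prod_congr rfl fun c _ => ?_
        rw [← Finset.prod_pow]
        exact Finset.prod_congr rfl fun r _ => (pow_mul _ _ _).symm
    _ = ∏ r : R, ∏ c ∈ d.support, X r ^ (M r c * d c) := Finset.prod_comm
    _ = ∏ r : R, X r ^ (colSum M d r) := by
        refine Finset.prod_congr rfl fun r _ => ?_
        rw [Finset.prod_pow_eq_pow_sum, colSum_apply, Finsupp.sum]
        congr 1
        exact Finset.sum_congr rfl fun c _ => mul_comm _ _

lemma toricMap_eq_zero_iff {R C : Type*} [Fintype R] (M : Matrix R C ℕ) (f : MvPolynomial C ℂ) :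
    toricMap M f = 0 ↔ ∀ d0 ∈ f.support,
      ∑ d ∈ f.support.filter (fun d => colSum M d = colSum M d0), coeff d f = 0 := by
  have hrep : toricMap M f = ∑ d ∈ f.support, monomial (colSum M d) (coeff d f) := by
    conv_lhs => rw [f.as_sum]
    rw [map_sum]
    exact Finset.sum_congr rfl fun d _ => toricMap_monomial M d _
  have hco : ∀ w : R →₀ ℕ, coeff w (toricMap M f)
      = ∑ d ∈ f.support.filter (fun d => colSum M d = w), coeff d f := by
    intro w
    rw [hrep, coeff_sum, Finset.sum_filter]
    exact Finset.sum_congr rfl fun d _ => coeff_monomial w (colSum M d) _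
  constructor
  · intro h d0 _
    rw [← hco]
    simp [h]
  · intro h
    ext w
    rw [hco, coeff_zero]
    by_cases hw : ∃ d0 ∈ f.support, colSum M d0 = w
    · obtain ⟨d0, hd0, hw⟩ := hw
      rw [← hw]
      exact h d0 hd0
    · rw [Finset.sum_eq_zero]
      intro d hd
      simp only [Finset.mem_filter] at hd
      exact absurd ⟨d, hd.1, hd.2⟩ hw

lemma ker_toricMap_congr {R R' C : Type*} [Fintype R] [Fintype R']
    (M : Matrix R C ℕ) (N : Matrix R' C ℕ)
    (H : ∀ d d' : C →₀ ℕ, colSum M d = colSum M d' ↔ colSum N d = colSum N d') :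
    RingHom.ker (toricMap M) = RingHom.ker (toricMap N) := by
  ext f
  rw [RingHom.mem_ker, RingHom.mem_ker, toricMap_eq_zero_iff, toricMap_eq_zero_iff]
  constructor <;> intro h d0 hd0 <;>
    [ (rw [show (f.support.filter fun d => colSum N d = colSum N d0)
        = f.support.filter fun d => colSum M d = colSum M d0 from
        Finset.filter_congr fun d _ => (H d d0).symm]; exact h d0 hd0);
      (rw [show (f.support.filter fun d => colSum M d = colSum M d0)
        = f.support.filter fun d => colSum N d = colSum N d0 from
        Finset.filter_congr fun d _ => H d d0]; exact h d0 hd0)]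

namespace RTree
variable {L : Type} (T : RTree L)

lemma leaf_ne_root {i : L} (h : i ≠ T.root) : T.leaf i ≠ T.leaf T.root :=
  fun he => h (T.leaf.injective he)

lemma isAnc_leaf_iff {i : L} (hi : T.leaf i ≠ T.leaf T.root) (v : T.V) :
    T.isAnc (T.leaf i) v ↔ v = T.leaf i := by
  constructor
  · rintro ⟨k, hk⟩
    cases k with
    | zero => exact hk
    | succ k =>
        exfalso
        have h1 : ∀ u, T.par u ≠ T.leaf i := (T.leaf_iff _ hi).mp ⟨i, rfl⟩
        rw [Function.iterate_succ_apply'] at hk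
        exact h1 _ hk
  · rintro rfl; exact ⟨0, rfl⟩

lemma par_iterate_root (k : ℕ) : T.par^[k] (T.leaf T.root) = T.leaf T.root := by
  induction k with
  | zero => rfl
  | succ k ih => rw [Function.iterate_succ_apply', ih, T.par_root]

lemma not_isAnc_root {v : T.V} (hv : v ≠ T.leaf T.root) : ¬ T.isAnc v (T.leaf T.root) := by
  rintro ⟨k, hk⟩; rw [par_iterate_root] at hk; exact hv hk.symm

lemma isAnc_rootchild {u : T.V} (hu : u ≠ T.leaf T.root ∧ T.par u = T.leaf T.root)
    (huniq : ∀ w, w ≠ T.leaf T.root ∧ T.par w = T.leaf T.root → w = u)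
    {v : T.V} (hv : v ≠ T.leaf T.root) : T.isAnc u v := by
  obtain ⟨k, hk⟩ := T.reaches_root v
  induction k generalizing v with
  | zero => exact absurd hk hv
  | succ k ih =>
    by_cases h : T.par v = T.leaf T.root
    · exact ⟨0, (huniq v ⟨hv, h⟩)⟩
    · rw [Function.iterate_succ_apply] at hk
      obtain ⟨k', hk'⟩ := ih h hk
      exact ⟨k' + 1, by rwa [Function.iterate_succ_apply]⟩

lemma onPath_symm {v : T.V} {i j : L} (h : T.onPath v i j) : T.onPath v j i := h.symm

end RTree

lemma Pairs.exists_rep {α : Type} (c : Pairs α) : ∃ i j : α, i ≠ j ∧ c.1 = s(i, j) := by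
  obtain ⟨⟨i, j⟩, h⟩ := Quot.exists_rep c.1
  have h' : c.1 = s(i, j) := h.symm
  refine ⟨i, j, fun he => c.2 ?_, h'⟩
  rw [h', he]
  exact Sym2.mk_isDiag_iff.mpr rfl

lemma pair_exists_iff {α : Type*} {R : α → α → Prop} (hR : ∀ i j, R i j → R j i)
    {i0 j0 : α} : (∃ i j, (s(i0, j0) : Sym2 α) = s(i, j) ∧ R i j) ↔ R i0 j0 := by
  constructor
  · rintro ⟨i, j, he, hr⟩
    rcases Sym2.eq_iff.mp he with ⟨rfl, rfl⟩ | ⟨rfl, rfl⟩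
    · exact hr
    · exact hR _ _ hr
  · exact fun h => ⟨i0, j0, rfl, h⟩

lemma BmatS_apply {L : Type} (T : RTree L) (v : T.NR) (c : Pairs L) {i0 j0 : L}
    (hc : c.1 = s(i0, j0)) :
    BmatS T v c = if T.onPath v.1 i0 j0 then 1 else 0 := by
  simp only [BmatS, Matrix.of_apply, hc]
  exact if_congr (pair_exists_iff (fun i j => T.onPath_symm)) rfl rfl

namespace RTree
variable {L : Type} (T : RTree L)

lemma onPath_leaf_iff {i : L} (hi : T.leaf i ≠ T.leaf T.root) (i0 j0 : L) :
    T.onPath (T.leaf i) i0 j0 ↔ Xor' (i0 = i) (j0 = i) := by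
  unfold onPath
  rw [T.isAnc_leaf_iff hi, T.isAnc_leaf_iff hi]
  constructor <;> intro h <;>
    rcases h with ⟨h1, h2⟩ | ⟨h1, h2⟩
  · exact Or.inl ⟨T.leaf.injective h1, fun he => h2 (he ▸ rfl)⟩
  · exact Or.inr ⟨T.leaf.injective h1, fun he => h2 (he ▸ rfl)⟩
  · exact Or.inl ⟨h1 ▸ rfl, fun he => h2 (T.leaf.injective he)⟩
  · exact Or.inr ⟨h1 ▸ rfl, fun he => h2 (T.leaf.injective he)⟩

/-- The weight of a row: 1 for each of (being a leaf edge) and (being the root edge). -/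
noncomputable def wt (v : T.NR) : ℕ :=
  (if v.1 ∈ Set.range T.leaf then 1 else 0) + (if T.par v.1 = T.leaf T.root then 1 else 0)

lemma wt_sum (c : Pairs L) : ∑ v : T.NR, T.wt v * BmatS T v c = 2 := by
  obtain ⟨i0, j0, hne, hc⟩ := Pairs.exists_rep c
  obtain ⟨u, hu, huniq⟩ := T.root_unique_child
  have huniq' : ∀ w, w ≠ T.leaf T.root ∧ T.par w = T.leaf T.root → w = u := huniq
  have hanc_u : ∀ v : T.V, v ≠ T.leaf T.root → T.isAnc u v :=
    fun v hv => T.isAnc_rootchild hu huniq' hv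
  let rowOf : L → T.NR := fun k =>
    if hk : k = T.root then ⟨u, hu.1⟩ else ⟨T.leaf k, T.leaf_ne_root hk⟩
  have key : ∀ v : T.NR, T.wt v * BmatS T v c
      = (if v = rowOf i0 then 1 else 0) + (if v = rowOf j0 then 1 else 0) := by
    intro v
    rw [BmatS_apply T v c hc]
    rcases v with ⟨v, hv⟩
    by_cases hQ : T.par v = T.leaf T.root
    · have hvu : v = u := huniq' v ⟨hv, hQ⟩
      subst hvu
      by_cases hP : v ∈ Set.range T.leaf
      · -- v is both a leaf and the root child : the tree is a single edge
        obtain ⟨k, hk⟩ := hP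
        have hkr : k ≠ T.root := fun he => hv (he ▸ hk).symm
        have hlne : T.leaf k ≠ T.leaf T.root := fun h => hv (hk.symm.trans h)
        have hall : ∀ j : L, j ≠ T.root → j = k := by
          intro j hj
          have h1 : T.isAnc v (T.leaf j) := hanc_u _ (T.leaf_ne_root hj)
          rw [← hk, T.isAnc_leaf_iff hlne] at h1
          exact T.leaf.injective h1
        have hij : (i0 = T.root ∧ j0 = k) ∨ (i0 = k ∧ j0 = T.root) := by
          by_cases h1 : i0 = T.root
          · exact Or.inl ⟨h1, hall j0 fun he => hne (h1.trans he.symm)⟩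
          · refine Or.inr ⟨hall i0 h1, ?_⟩
            by_contra h2
            exact hne ((hall i0 h1).trans (hall j0 h2).symm)
        have honp : T.onPath v i0 j0 := by
          unfold RTree.onPath
          rcases hij with ⟨h1, h2⟩ | ⟨h1, h2⟩
          · rw [h1, h2]
            exact Or.inr ⟨⟨0, hk⟩, T.not_isAnc_root hv⟩
          · rw [h1, h2]
            exact Or.inl ⟨⟨0, hk⟩, T.not_isAnc_root hv⟩
        have hwt : T.wt ⟨v, hv⟩ = 2 := by
          unfold RTree.wt
          rw [if_pos ⟨k, hk⟩, if_pos hQ]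
        have eu : ∀ j : L, j = T.root → (⟨v, hv⟩ : T.NR) = rowOf j := by
          intro j hj
          simp only [rowOf, dif_pos hj]
        have ek : ∀ j : L, j = k → (⟨v, hv⟩ : T.NR) = rowOf j := by
          intro j hj
          have hjr : ¬ j = T.root := fun hr => hkr (hj ▸ hr)
          simp only [rowOf, dif_neg hjr]
          exact Subtype.ext (hk.symm.trans (congrArg T.leaf hj.symm))
        rcases hij with ⟨h1, h2⟩ | ⟨h1, h2⟩
        · rw [hwt, if_pos honp, if_pos (eu i0 h1), if_pos (ek j0 h2)]
        · rw [hwt, if_pos honp, if_pos (ek i0 h1), if_pos (eu j0 h2)]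
      · -- v = root child, not a leaf
        have hwt : T.wt ⟨v, hv⟩ = 1 := by
          unfold RTree.wt
          rw [if_neg hP, if_pos hQ]
        have honp : T.onPath v i0 j0 ↔ (i0 = T.root ∨ j0 = T.root) := by
          unfold RTree.onPath
          constructor
          · rintro (⟨h1, h2⟩ | ⟨h1, h2⟩)
            · right; by_contra h3
              exact h2 (hanc_u _ (T.leaf_ne_root h3))
            · left; by_contra h3
              exact h2 (hanc_u _ (T.leaf_ne_root h3))
          · rintro (h | h)
            · subst h
              exact Or.inr ⟨hanc_u _ (T.leaf_ne_root (Ne.symm hne)), T.not_isAnc_root hv⟩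
            · subst h
              exact Or.inl ⟨hanc_u _ (T.leaf_ne_root hne), T.not_isAnc_root hv⟩
        have hrow : ∀ j : L, (⟨v, hv⟩ : T.NR) = rowOf j ↔ j = T.root := by
          intro j
          simp only [rowOf]
          by_cases hj : j = T.root
          · rw [dif_pos hj]
            exact iff_of_true (Subtype.ext rfl) hj
          · rw [dif_neg hj]
            refine iff_of_false ?_ hj
            intro he
            exact hP ⟨j, (congrArg Subtype.val he).symm⟩
        by_cases h1 : i0 = T.root
        · have h2 : ¬ j0 = T.root := fun he => hne (h1.trans he.symm)
          rw [hwt, one_mul, if_pos (honp.mpr (Or.inl h1)), if_pos ((hrow i0).mpr h1),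
            if_neg (fun he => h2 ((hrow j0).mp he))]
        · by_cases h2 : j0 = T.root
          · rw [hwt, one_mul, if_pos (honp.mpr (Or.inr h2)),
              if_neg (fun he => h1 ((hrow i0).mp he)), if_pos ((hrow j0).mpr h2)]
          · rw [hwt, one_mul, if_neg (fun h => (honp.mp h).elim h1 h2),
              if_neg (fun he => h1 ((hrow i0).mp he)), if_neg (fun he => h2 ((hrow j0).mp he))]
    · -- not the root child
      by_cases hP : v ∈ Set.range T.leaf
      · obtain ⟨k, hk⟩ := hP
        have hkr : k ≠ T.root := fun he => hv (he ▸ hk).symm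
        have hlne : T.leaf k ≠ T.leaf T.root := fun h => hv (hk.symm.trans h)
        have hwt : T.wt ⟨v, hv⟩ = 1 := by
          unfold RTree.wt
          rw [if_pos ⟨k, hk⟩, if_neg hQ]
        have honp : T.onPath v i0 j0 ↔ Xor' (i0 = k) (j0 = k) := by
          rw [← hk]
          exact T.onPath_leaf_iff hlne i0 j0
        have hrow : ∀ j : L, (⟨v, hv⟩ : T.NR) = rowOf j ↔ j = k := by
          intro j
          simp only [rowOf]
          by_cases hj : j = T.root
          · rw [dif_pos hj]
            constructor
            · intro he
              have hvu2 : v = u := congrArg Subtype.val he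
              exact absurd (hvu2.symm ▸ hu.2) hQ
            · intro he
              exact absurd (he ▸ hj) hkr
          · rw [dif_neg hj]
            constructor
            · intro he
              exact T.leaf.injective ((congrArg Subtype.val he).symm.trans hk.symm)
            · rintro rfl
              exact Subtype.ext hk.symm
        by_cases h1 : i0 = k
        · have h2 : ¬ j0 = k := fun he => hne (h1.trans he.symm)
          rw [hwt, one_mul, if_pos (honp.mpr (Or.inl ⟨h1, h2⟩)), if_pos ((hrow i0).mpr h1),
            if_neg (fun he => h2 ((hrow j0).mp he))]
        · by_cases h2 : j0 = k
          · rw [hwt, one_mul, if_pos (honp.mpr (Or.inr ⟨h2, h1⟩)),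
              if_neg (fun he => h1 ((hrow i0).mp he)), if_pos ((hrow j0).mpr h2)]
          · rw [hwt, one_mul,
              if_neg (fun h => (honp.mp h).elim (fun p => h1 p.1) (fun p => h2 p.1)),
              if_neg (fun he => h1 ((hrow i0).mp he)), if_neg (fun he => h2 ((hrow j0).mp he))]
      · have hwt : T.wt ⟨v, hv⟩ = 0 := by
          unfold RTree.wt
          rw [if_neg hP, if_neg hQ]
        have hrow : ∀ j : L, (⟨v, hv⟩ : T.NR) ≠ rowOf j := by
          intro j he
          simp only [rowOf] at he
          by_cases hj : j = T.root
          · rw [dif_pos hj] at he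
            have hvu2 : v = u := congrArg Subtype.val he
            exact hQ (hvu2.symm ▸ hu.2)
          · rw [dif_neg hj] at he
            exact hP ⟨j, (congrArg Subtype.val he).symm⟩
        rw [hwt, zero_mul, if_neg (hrow i0), if_neg (hrow j0)]
        omega
  rw [Finset.sum_congr rfl fun v _ => key v, Finset.sum_add_distrib]
  rw [Finset.sum_ite_eq' Finset.univ (rowOf i0) (fun _ => 1),
    Finset.sum_ite_eq' Finset.univ (rowOf j0) (fun _ => 1)]
  simp

end RTree

section Attach

variable {L' : Type} (T' : RTree L') (ℓ : L') (hℓ : ℓ ≠ T'.root) (m : ℕ) (hm : 2 ≤ m)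

local notation "TT" => attachStar T' ℓ hℓ m hm

lemma newPar_inl_iter (k : ℕ) (w : T'.V) :
    (TT).par^[k] (Sum.inl w) = Sum.inl (T'.par^[k] w) :=
  AttachAux.newPar_iter T' ℓ m k w

lemma attach_isAnc_inl_inl (w w' : T'.V) :
    (TT).isAnc (Sum.inl w) (Sum.inl w') ↔ T'.isAnc w w' := by
  constructor
  · rintro ⟨k, hk⟩
    rw [newPar_inl_iter] at hk
    exact ⟨k, Sum.inl.inj hk⟩
  · rintro ⟨k, hk⟩
    exact ⟨k, by rw [newPar_inl_iter, hk]⟩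

lemma attach_isAnc_inl_inr (w : T'.V) (α : Fin m) :
    (TT).isAnc (Sum.inl w) (Sum.inr α) ↔ T'.isAnc w (T'.leaf ℓ) := by
  constructor
  · rintro ⟨k, hk⟩
    cases k with
    | zero => exact absurd (hk : (Sum.inr α : T'.V ⊕ Fin m) = Sum.inl w) Sum.inr_ne_inl
    | succ k =>
        change (TT).par^[k] ((TT).par (Sum.inr α : (TT).V)) = _ at hk
        have h1 : (TT).par (Sum.inr α) = Sum.inl (T'.leaf ℓ) := rfl
        rw [h1, newPar_inl_iter] at hk
        exact ⟨k, Sum.inl.inj hk⟩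
  · rintro ⟨k, hk⟩
    refine ⟨k + 1, ?_⟩
    change (TT).par^[k] ((TT).par (Sum.inr α : (TT).V)) = _
    have h1 : (TT).par (Sum.inr α) = Sum.inl (T'.leaf ℓ) := rfl
    rw [h1, newPar_inl_iter, hk]

lemma attach_isAnc_inr (α : Fin m) (v : (TT).V) :
    (TT).isAnc (Sum.inr α) v ↔ v = Sum.inr α := by
  constructor
  · rintro ⟨k, hk⟩
    cases k with
    | zero => exact hk
    | succ k =>
        exfalso
        rcases v with w | β
        · rw [newPar_inl_iter] at hk
          exact absurd hk (by simp)
        · change (TT).par^[k] ((TT).par (Sum.inr β : (TT).V)) = _ at hk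
          have h1 : (TT).par (Sum.inr β) = Sum.inl (T'.leaf ℓ) := rfl
          rw [h1, newPar_inl_iter] at hk
          exact absurd hk (by simp)
  · rintro rfl; exact ⟨0, rfl⟩

/-- What a path-membership condition in the big tree looks like in terms of `T'`. -/
def Rel' (w : T'.V) : NewLabels L' ℓ m → NewLabels L' ℓ m → Prop := fun i j =>
  match i, j with
  | Sum.inl x, Sum.inl y => T'.onPath w x.1 y.1
  | Sum.inl x, Sum.inr _ => T'.onPath w x.1 ℓ
  | Sum.inr _, Sum.inl y => T'.onPath w y.1 ℓ
  | Sum.inr _, Sum.inr _ => False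

lemma attach_leaf_inl (x : {x : L' // x ≠ ℓ}) :
    (TT).leaf (Sum.inl x) = Sum.inl (T'.leaf x.1) := rfl

lemma attach_leaf_inr (α : Fin m) : (TT).leaf (Sum.inr α) = Sum.inr α := rfl

lemma attach_onPath_inl (w : T'.V) (i j : NewLabels L' ℓ m) :
    (TT).onPath (Sum.inl w) i j ↔ Rel' T' ℓ m w i j := by
  rcases i with x | α <;> rcases j with y | β <;>
    simp only [RTree.onPath, Rel', attach_leaf_inl, attach_leaf_inr,
      attach_isAnc_inl_inl, attach_isAnc_inl_inr]
  · exact iff_of_eq (xor_comm _ _)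
  · exact iff_of_eq (xor_self _)

end Attach

section Attach2

variable {L' : Type} (T' : RTree L') (ℓ : L') (hℓ : ℓ ≠ T'.root) (m : ℕ) (hm : 2 ≤ m)

local notation "TT" => attachStar T' ℓ hℓ m hm

lemma Rel'_symm (w : T'.V) : ∀ i j, Rel' T' ℓ m w i j → Rel' T' ℓ m w j i := by
  rintro (x | α) (y | β) h
  · exact T'.onPath_symm h
  · exact h
  · exact h
  · exact h.elim

lemma attach_row_edge (e : T'.NR) (hne : (Sum.inl e.1 : (TT).V) ≠ (TT).leaf (TT).root)
    (c : Pairs (NewLabels L' ℓ m)) :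
    BmatS (TT) ⟨Sum.inl e.1, hne⟩ c = psiMat T' ℓ m (Sum.inl (some e)) c := by
  obtain ⟨i0, j0, hne0, hc⟩ := Pairs.exists_rep c
  rw [BmatS_apply (TT) _ c hc]
  simp only [psiMat, Matrix.of_apply]
  refine if_congr ?_ rfl rfl
  rw [attach_onPath_inl]
  have h1 : (∃ i j, c.1 = s(i, j) ∧ Rel' T' ℓ m e.1 i j) ↔ Rel' T' ℓ m e.1 i0 j0 := by
    rw [hc]; exact pair_exists_iff (Rel'_symm T' ℓ m e.1)
  rw [← h1]
  constructor
  · rintro ⟨(x | α), (y | β), he, h⟩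
    · exact Or.inl ⟨x, y, he, h⟩
    · exact Or.inr ⟨x, β, he, h⟩
    · exact Or.inr ⟨y, α, he.trans Sym2.eq_swap, h⟩
    · exact h.elim
  · rintro (⟨x, y, he, h⟩ | ⟨x, α, he, h⟩)
    · exact ⟨Sum.inl x, Sum.inl y, he, h⟩
    · exact ⟨Sum.inl x, Sum.inr α, he, h⟩

lemma attach_row_new (α : Fin m) (hne : (Sum.inr α : (TT).V) ≠ (TT).leaf (TT).root)
    (c : Pairs (NewLabels L' ℓ m)) :
    BmatS (TT) ⟨Sum.inr α, hne⟩ c = psiMat T' ℓ m (Sum.inr (some α.succ)) c := by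
  obtain ⟨i0, j0, hne0, hc⟩ := Pairs.exists_rep c
  rw [BmatS_apply (TT) _ c hc]
  simp only [psiMat, Matrix.of_apply]
  rw [if_neg (Fin.succ_ne_zero α)]
  refine if_congr ?_ rfl rfl
  have hmem : (∃ α' : Fin m, α.succ = α'.succ ∧ (Sum.inr α' : NewLabels L' ℓ m) ∈ c.1)
      ↔ (Sum.inr α : NewLabels L' ℓ m) ∈ c.1 := by
    constructor
    · rintro ⟨α', hsucc, hmemb⟩
      cases Fin.succ_inj.mp hsucc
      exact hmemb
    · intro h; exact ⟨α, rfl, h⟩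
  rw [hmem, hc, Sym2.mem_iff]
  have hl : ∀ i : NewLabels L' ℓ m, ((TT).leaf i = Sum.inr α) ↔ i = Sum.inr α := by
    intro i
    constructor
    · intro h; exact (TT).leaf.injective (h.trans (attach_leaf_inr T' ℓ hℓ m hm α).symm)
    · rintro rfl; rfl
  unfold RTree.onPath
  rw [attach_isAnc_inr, attach_isAnc_inr, hl, hl]
  constructor
  · rintro (⟨h, _⟩ | ⟨h, _⟩)
    · exact Or.inl h.symm
    · exact Or.inr h.symm
  · rintro (h | h)
    · exact Or.inl ⟨h.symm, fun hj => hne0 (h.symm.trans hj.symm)⟩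
    · exact Or.inr ⟨h.symm, fun hi => hne0 (hi.trans h)⟩

lemma attach_row_u0 (hne : (Sum.inl (T'.leaf ℓ) : (TT).V) ≠ (TT).leaf (TT).root)
    (c : Pairs (NewLabels L' ℓ m)) :
    BmatS (TT) ⟨Sum.inl (T'.leaf ℓ), hne⟩ c = psiMat T' ℓ m (Sum.inr (some 0)) c := by
  obtain ⟨i0, j0, hne0, hc⟩ := Pairs.exists_rep c
  have hlℓ : T'.leaf ℓ ≠ T'.leaf T'.root := T'.leaf_ne_root hℓ
  rw [BmatS_apply (TT) _ c hc]
  simp only [psiMat, Matrix.of_apply]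
  rw [if_pos trivial]
  refine if_congr ?_ rfl rfl
  rw [attach_onPath_inl, hc]
  rcases i0 with x | α <;> rcases j0 with y | β <;>
    simp only [Rel', Sym2.mem_iff]
  · refine iff_of_false ?_ ?_
    · intro h
      rcases (T'.onPath_leaf_iff hlℓ _ _).mp h with ⟨h1, _⟩ | ⟨h1, _⟩
      exacts [x.2 h1, y.2 h1]
    · rintro ⟨_, α, h | h⟩ <;> exact absurd h (by simp)
  · refine iff_of_true ?_ ⟨⟨x, Or.inl rfl⟩, β, Or.inr rfl⟩
    exact (T'.onPath_leaf_iff hlℓ _ _).mpr (Or.inr ⟨rfl, x.2⟩)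
  · refine iff_of_true ?_ ⟨⟨y, Or.inr rfl⟩, α, Or.inl rfl⟩
    exact (T'.onPath_leaf_iff hlℓ _ _).mpr (Or.inr ⟨rfl, y.2⟩)
  · refine iff_of_false (fun h => h) ?_
    rintro ⟨⟨x, h | h⟩, _⟩ <;> exact absurd h (by simp)

lemma psi_inl_none (c : Pairs (NewLabels L' ℓ m)) : psiMat T' ℓ m (Sum.inl none) c = 1 := rfl

lemma psi_inr_none (c : Pairs (NewLabels L' ℓ m)) : psiMat T' ℓ m (Sum.inr none) c = 1 := rfl

end Attach2

lemma colSum_row_congr {R R' C : Type*} [Fintype R] [Fintype R'] {A : Matrix R C ℕ}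
    {B : Matrix R' C ℕ} {v : R} {r : R'} (h : ∀ c, A v c = B r c) (e : C →₀ ℕ) :
    colSum A e v = colSum B e r := by
  rw [colSum_apply, colSum_apply]
  exact Finsupp.sum_congr fun c _ => by rw [h c]

lemma colSum_total {L : Type} (T : RTree L) (d d' : Pairs L →₀ ℕ)
    (h : colSum (BmatS T) d = colSum (BmatS T) d') :
    (d.sum fun _ n => n) = d'.sum fun _ n => n := by
  have key : ∀ e : Pairs L →₀ ℕ,
      ∑ v : T.NR, T.wt v * colSum (BmatS T) e v = 2 * e.sum fun _ n => n := by
    intro e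
    calc ∑ v : T.NR, T.wt v * colSum (BmatS T) e v
        = ∑ v : T.NR, ∑ c ∈ e.support, T.wt v * (e c * BmatS T v c) := by
          refine Finset.sum_congr rfl fun v _ => ?_
          rw [colSum_apply, Finsupp.sum, Finset.mul_sum]
      _ = ∑ c ∈ e.support, ∑ v : T.NR, T.wt v * (e c * BmatS T v c) := Finset.sum_comm
      _ = ∑ c ∈ e.support, e c * 2 := by
          refine Finset.sum_congr rfl fun c _ => ?_
          rw [show (∑ v : T.NR, T.wt v * (e c * BmatS T v c))
              = e c * ∑ v : T.NR, T.wt v * BmatS T v c from by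
            rw [Finset.mul_sum]
            exact Finset.sum_congr rfl fun v _ => mul_left_comm _ _ _]
          rw [T.wt_sum c]
      _ = 2 * e.sum fun _ n => n := by
          rw [Finsupp.sum, Finset.mul_sum]
          exact Finset.sum_congr rfl fun c _ => mul_comm _ _
  have h2 : 2 * (d.sum fun _ n => n) = 2 * d'.sum fun _ n => n := by
    rw [← key d, ← key d', h]
  exact Nat.eq_of_mul_eq_mul_left (by norm_num) h2

/-- Let `T'` be a rooted tree, `ℓ` a non-root leaf of `T'`, `m ≥ 2`, and let `T` be
obtained from `T'` by attaching `m` new leaves `l_1, …, l_m` as children of `ℓ`, so that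
`ℓ` becomes an internal vertex of `T` of out-degree `m` and
`Lv(T) = (Lv(T') ∖ {ℓ}) ∪ {l_1, …, l_m}`.  Let `ψ` be the `ℂ`-algebra homomorphism
`ℂ[p_ij : {i,j} ⊆ Lv(T)] → ℂ[s_⋆, s_e (e ∈ E(T')), u_⋆, u_0, u_1, …, u_m]` with
`ψ(p_ij) = s_⋆ u_⋆ ∏_{e ∈ P_{T'}(i,j)} s_e` for `i, j ∈ Lv(T') ∖ {ℓ}`,
`ψ(p_{l_α l_β}) = s_⋆ u_⋆ u_α u_β`, and
`ψ(p_{i,l_α}) = s_⋆ u_⋆ u_0 u_α ∏_{e ∈ P_{T'}(i,ℓ)} s_e`.  Then `ker ψ = ker φ_{B_T}`.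
(This expresses the toric ideal `I(B_T)` as the toric fiber product of the toric ideals
`I(B*_{T'})` and `I(B*_{S_m})`, where `S_m` is the star tree on `m + 1` leaves glued to
`T'` along the edge into `ℓ`.) -/
theorem statement11 {L' : Type} [Fintype L'] [DecidableEq L'] (T' : RTree L')
    (ℓ : L') (hℓ : ℓ ≠ T'.root) (m : ℕ) (hm : 2 ≤ m) :
    RingHom.ker (toricMap (psiMat T' ℓ m)) =
      RingHom.ker (toricMap (BmatS (attachStar T' ℓ hℓ m hm))) := by
  apply ker_toricMap_congr
  intro d d'
  constructor
  · intro h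
    ext v
    rcases v with ⟨w | α, hv⟩
    · have hw : w ≠ T'.leaf T'.root := fun h' => hv (by rw [h']; rfl)
      calc colSum (BmatS (attachStar T' ℓ hℓ m hm)) d ⟨Sum.inl w, hv⟩
          = colSum (psiMat T' ℓ m) d (Sum.inl (some ⟨w, hw⟩)) :=
            colSum_row_congr (fun c => attach_row_edge T' ℓ hℓ m hm ⟨w, hw⟩ hv c) d
        _ = colSum (psiMat T' ℓ m) d' (Sum.inl (some ⟨w, hw⟩)) := DFunLike.congr_fun h _
        _ = colSum (BmatS (attachStar T' ℓ hℓ m hm)) d' ⟨Sum.inl w, hv⟩ :=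
            (colSum_row_congr (fun c => attach_row_edge T' ℓ hℓ m hm ⟨w, hw⟩ hv c) d').symm
    · calc colSum (BmatS (attachStar T' ℓ hℓ m hm)) d ⟨Sum.inr α, hv⟩
          = colSum (psiMat T' ℓ m) d (Sum.inr (some α.succ)) :=
            colSum_row_congr (fun c => attach_row_new T' ℓ hℓ m hm α hv c) d
        _ = colSum (psiMat T' ℓ m) d' (Sum.inr (some α.succ)) := DFunLike.congr_fun h _
        _ = colSum (BmatS (attachStar T' ℓ hℓ m hm)) d' ⟨Sum.inr α, hv⟩ :=
            (colSum_row_congr (fun c => attach_row_new T' ℓ hℓ m hm α hv c) d').symm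
  · intro h
    have htot : (d.sum fun _ n => n) = d'.sum fun _ n => n :=
      colSum_total (attachStar T' ℓ hℓ m hm) d d' h
    have hones : ∀ (dd : Pairs (NewLabels L' ℓ m) →₀ ℕ) (r : PsiVars T' m),
        (∀ c, psiMat T' ℓ m r c = 1) →
        colSum (psiMat T' ℓ m) dd r = dd.sum fun _ n => n := by
      intro dd r hr
      rw [colSum_apply]
      exact Finsupp.sum_congr fun c _ => by rw [hr c, mul_one]
    ext r
    rcases r with e | β
    · rcases e with _ | e
      · rw [hones d _ (fun c => psi_inl_none T' ℓ m c),
          hones d' _ (fun c => psi_inl_none T' ℓ m c)]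
        exact htot
      · have hv : (Sum.inl e.1 : (attachStar T' ℓ hℓ m hm).V)
            ≠ (attachStar T' ℓ hℓ m hm).leaf (attachStar T' ℓ hℓ m hm).root :=
          fun hh => e.2 (Sum.inl.inj hh)
        calc colSum (psiMat T' ℓ m) d (Sum.inl (some e))
            = colSum (BmatS (attachStar T' ℓ hℓ m hm)) d ⟨Sum.inl e.1, hv⟩ :=
              (colSum_row_congr (fun c => attach_row_edge T' ℓ hℓ m hm e hv c) d).symm
          _ = colSum (BmatS (attachStar T' ℓ hℓ m hm)) d' ⟨Sum.inl e.1, hv⟩ :=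
              DFunLike.congr_fun h _
          _ = colSum (psiMat T' ℓ m) d' (Sum.inl (some e)) :=
              colSum_row_congr (fun c => attach_row_edge T' ℓ hℓ m hm e hv c) d'
    · rcases β with _ | β
      · rw [hones d _ (fun c => psi_inr_none T' ℓ m c),
          hones d' _ (fun c => psi_inr_none T' ℓ m c)]
        exact htot
      · by_cases hβ : β = 0
        · subst hβ
          have hv : (Sum.inl (T'.leaf ℓ) : (attachStar T' ℓ hℓ m hm).V)
              ≠ (attachStar T' ℓ hℓ m hm).leaf (attachStar T' ℓ hℓ m hm).root :=
            fun hh => hℓ (T'.leaf.injective (Sum.inl.inj hh))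
          calc colSum (psiMat T' ℓ m) d (Sum.inr (some 0))
              = colSum (BmatS (attachStar T' ℓ hℓ m hm)) d ⟨Sum.inl (T'.leaf ℓ), hv⟩ :=
                (colSum_row_congr (fun c => attach_row_u0 T' ℓ hℓ m hm hv c) d).symm
            _ = colSum (BmatS (attachStar T' ℓ hℓ m hm)) d' ⟨Sum.inl (T'.leaf ℓ), hv⟩ :=
                DFunLike.congr_fun h _
            _ = colSum (psiMat T' ℓ m) d' (Sum.inr (some 0)) :=
                colSum_row_congr (fun c => attach_row_u0 T' ℓ hℓ m hm hv c) d'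
        · obtain ⟨γ, hγ⟩ : ∃ γ : Fin m, β = γ.succ := ⟨β.pred hβ, (Fin.succ_pred β hβ).symm⟩
          subst hγ
          have hv : (Sum.inr γ : (attachStar T' ℓ hℓ m hm).V)
              ≠ (attachStar T' ℓ hℓ m hm).leaf (attachStar T' ℓ hℓ m hm).root :=
            fun hh => Sum.inr_ne_inl (hh : (Sum.inr γ : T'.V ⊕ Fin m) = Sum.inl (T'.leaf T'.root))
          calc colSum (psiMat T' ℓ m) d (Sum.inr (some γ.succ))
              = colSum (BmatS (attachStar T' ℓ hℓ m hm)) d ⟨Sum.inr γ, hv⟩ :=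
                (colSum_row_congr (fun c => attach_row_new T' ℓ hℓ m hm γ hv c) d).symm
            _ = colSum (BmatS (attachStar T' ℓ hℓ m hm)) d' ⟨Sum.inr γ, hv⟩ :=
                DFunLike.congr_fun h _
            _ = colSum (psiMat T' ℓ m) d' (Sum.inr (some γ.succ)) :=
                colSum_row_congr (fun c => attach_row_new T' ℓ hℓ m hm γ hv c) d'
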